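/- Let F be a field with at least 4 elements. Then every matrix in SL_2(F) is a product of at most three commutators of unipotent matrices of index 2. Moreover: if char(F) = 2, then every matrix in SL_2(F) is a product of at most two commutators of unipotent matrices of index 2; and if char(F) ≠ 2, then every matrix in SL_2(F) is a product of at most two commutators of unipotent matrices of index 2 if and only if −1 = a² + b² for some nonzero a, b ∈ F. -/

import Mathlib

open Matrix

variable {F : Type*} [Field F]

/-- A unipotent matrix of index 2: `A ≠ I` and `(A - I)² = 0`. -/
def IsU2 {m : Type*} [Fintype m] [DecidableEq m] (A : Matrix m m F) : Prop :=
  A ≠ 1 ∧ (A - 1) ^ 2 = 0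

/-- A commutator `X * Y * X⁻¹ * Y⁻¹` of unipotent matrices of index 2. -/
def IsCommU2 {m : Type*} [Fintype m] [DecidableEq m] (A : Matrix m m F) : Prop :=
  ∃ X Y : Matrix m m F, IsU2 X ∧ IsU2 Y ∧ A = X * Y * X⁻¹ * Y⁻¹

/-- `A` is a product of at most `k` commutators of unipotent matrices of index 2. -/
def IsProdCommU2 {m : Type*} [Fintype m] [DecidableEq m] (k : ℕ) (A : Matrix m m F) : Prop :=
  ∃ L : List (Matrix m m F), L.length ≤ k ∧ (∀ B ∈ L, IsCommU2 B) ∧ L.prod = A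

/-- `A` is a product of at most `k` unipotent matrices of index 2. -/
def IsProdU2 {m : Type*} [Fintype m] [DecidableEq m] (k : ℕ) (A : Matrix m m F) : Prop :=
  ∃ L : List (Matrix m m F), L.length ≤ k ∧ (∀ B ∈ L, IsU2 B) ∧ L.prod = A

abbrev M2 (F : Type*) [Field F] := Matrix (Fin 2) (Fin 2) F
lemma sq_zero {a : F} (h : a ^ 2 = 0) : a = 0 :=
  pow_eq_zero_iff (n := 2) (by norm_num) |>.mp h

lemma nilp_struct (N : M2 F) (h : N * N = 0) :
    N 1 1 = -N 0 0 ∧ N 0 0 ^ 2 + N 0 1 * N 1 0 = 0 := by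
  have h00 := congrFun (congrFun h 0) 0
  have h01 := congrFun (congrFun h 0) 1
  have h10 := congrFun (congrFun h 1) 0
  have h11 := congrFun (congrFun h 1) 1
  simp [Matrix.mul_apply, Fin.sum_univ_two] at h00 h01 h10 h11
  have key : N 1 1 = -N 0 0 := by
    by_cases htr : N 0 0 + N 1 1 = 0
    · linear_combination htr
    · exfalso
      have h2 : N 0 1 = 0 := by
        rcases mul_eq_zero.mp (show N 0 1 * (N 0 0 + N 1 1) = 0 by linear_combination h01) with h | h
        · exact h
        · exact absurd h htr
      have h3 : N 1 0 = 0 := by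
        rcases mul_eq_zero.mp (show N 1 0 * (N 0 0 + N 1 1) = 0 by linear_combination h10) with h | h
        · exact h
        · exact absurd h htr
      have hx := sq_zero (show (N 0 0) ^ 2 = 0 by linear_combination h00 - N 1 0 * h2)
      have hy := sq_zero (show (N 1 1) ^ 2 = 0 by linear_combination h11 - N 0 1 * h3)
      exact htr (by linear_combination hx + hy)
  exact ⟨key, by linear_combination h00⟩

lemma nilp_trace (N : M2 F) (h : N * N = 0) : N.trace = 0 := by
  rw [trace_fin_two, (nilp_struct N h).1]; ring

lemma anti (N M : M2 F) (hN : N 1 1 = -N 0 0) (hM : M 1 1 = -M 0 0) :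
    N * M + M * N = (N * M).trace • (1 : M2 F) := by
  ext i j
  fin_cases i <;> fin_cases j <;>
    simp [Matrix.mul_apply, Fin.sum_univ_two, Matrix.trace_fin_two, Matrix.one_apply, hN, hM] <;>
    ring

lemma hMN_eq (N M : M2 F) (hN2 : N * N = 0) (hM2 : M * M = 0) :
    M * N = (N * M).trace • 1 - N * M := by
  rw [eq_sub_iff_add_eq, add_comm]
  exact anti N M (nilp_struct N hN2).1 (nilp_struct M hM2).1

lemma hNMN_eq (N M : M2 F) (hN2 : N * N = 0) (hM2 : M * M = 0) :
    N * M * N = (N * M).trace • N := by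
  have hNNM : N * (N * M) = 0 := by rw [← mul_assoc, hN2, zero_mul]
  rw [mul_assoc, hMN_eq N M hN2 hM2, mul_sub, mul_smul_comm, mul_one, hNNM, sub_zero]

lemma comm_canon (N M : M2 F) (hN2 : N * N = 0) (hM2 : M * M = 0) :
    (1 + N) * (1 + M) * ((1 - N) * (1 - M)) =
      (1 - (N * M).trace) • 1 + (2 + (N * M).trace) • (N * M)
        + (N * M).trace • M - (N * M).trace • N := by
  set q := (N * M).trace with hq
  have hMN : M * N = q • 1 - N * M := hMN_eq N M hN2 hM2
  have hNNM : N * (N * M) = 0 := by rw [← mul_assoc, hN2, zero_mul]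
  have hNMM : N * M * M = 0 := by rw [mul_assoc, hM2, mul_zero]
  have hNMN : N * M * N = q • N := hNMN_eq N M hN2 hM2
  have hMNM : M * (N * M) = q • M - 0 := by
    rw [← mul_assoc, hMN, sub_mul, smul_mul_assoc, one_mul, mul_assoc, hM2, mul_zero]
  have hNMNM : N * M * (N * M) = q • (N * M) := by
    rw [← mul_assoc, hNMN, smul_mul_assoc]
  have expand : (1 + N) * (1 + M) * ((1 - N) * (1 - M)) =
      1 + N * M - M * N + M * (N * M) - N * M * N + N * M * (N * M)
        - N * N + N * (N * M) - M * M - N * M * M := by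
    noncomm_ring
  rw [expand, hN2, hM2, hNNM, hNMM, hNMN, hMNM, hNMNM, hMN]
  module

lemma NM_zero (N M : M2 F) (hN2 : N * N = 0) (hM2 : M * M = 0)
    (hq : (N * M).trace = 0) : N * M = 0 := by
  obtain ⟨hNs, hdN⟩ := nilp_struct N hN2
  obtain ⟨hMs, hdM⟩ := nilp_struct M hM2
  set n1 := N 0 0; set n2 := N 0 1; set n3 := N 1 0
  set m1 := M 0 0; set m2 := M 0 1; set m3 := M 1 0
  have hq' : 2 * (n1 * m1) + n2 * m3 + n3 * m2 = 0 := by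
    have := hq
    rw [trace_fin_two] at this
    simp only [Matrix.mul_apply, Fin.sum_univ_two] at this
    rw [hNs, hMs] at this
    linear_combination this
  have hxy : (n1 * m1 + n2 * m3) * (n1 * m1 + n3 * m2) = 0 := by
    linear_combination (n1 * m1) * hq' + (m2 * m3) * hdN - (n1 ^ 2) * hdM
  have hx : n1 * m1 + n2 * m3 = 0 := by
    rcases mul_eq_zero.mp hxy with h | h
    · exact h
    · linear_combination hq' - h
  have hy : n1 * m1 + n3 * m2 = 0 := by linear_combination hq' - hx
  have hu : n1 * m2 - n2 * m1 = 0 := by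
    rcases eq_or_ne n3 0 with h3 | h3
    · have hn1 : n1 = 0 := sq_zero (by linear_combination hdN - n2 * h3)
      rcases eq_or_ne n2 0 with h2 | h2
      · rw [hn1, h2]; ring
      · have hm3 : m3 = 0 := by
          have : n2 * m3 = 0 := by linear_combination hx - m1 * hn1
          exact (mul_eq_zero.mp this).resolve_left h2
        have hm1 : m1 = 0 := sq_zero (by linear_combination hdM - m2 * hm3)
        rw [hn1, hm1]; ring
    · have : n3 * (n1 * m2 - n2 * m1) = 0 := by
        linear_combination n1 * hy - m1 * hdN
      exact (mul_eq_zero.mp this).resolve_left h3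
  have hv : n3 * m1 - n1 * m3 = 0 := by
    rcases eq_or_ne n2 0 with h2 | h2
    · have hn1 : n1 = 0 := sq_zero (by linear_combination hdN - n3 * h2)
      rcases eq_or_ne n3 0 with h3 | h3
      · rw [hn1, h3]; ring
      · have hm2 : m2 = 0 := by
          have : n3 * m2 = 0 := by linear_combination hy - m1 * hn1
          exact (mul_eq_zero.mp this).resolve_left h3
        have hm1 : m1 = 0 := sq_zero (by linear_combination hdM - m3 * hm2)
        rw [hn1, hm1]; ring
    · have : n2 * (n3 * m1 - n1 * m3) = 0 := by
        linear_combination (-n1) * hx + m1 * hdN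
      exact (mul_eq_zero.mp this).resolve_left h2
  ext i j
  fin_cases i <;> fin_cases j <;>
    simp only [Matrix.mul_apply, Fin.sum_univ_two, Matrix.zero_apply, Fin.mk_zero, Fin.mk_one] <;>
    [ (exact hx); (rw [hMs]; linear_combination hu); (rw [hNs]; linear_combination hv);
      (rw [hNs, hMs]; linear_combination hy)]
lemma u2_nil (X : M2 F) (h : IsU2 X) : (X - 1) * (X - 1) = 0 := by
  have := h.2; rwa [pow_two] at this

lemma u2_entries (X : M2 F) (h : IsU2 X) :
    X 1 1 = 2 - X 0 0 ∧ (X 0 0 - 1) ^ 2 + X 0 1 * X 1 0 = 0 := by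
  obtain ⟨h1, h2⟩ := nilp_struct (X - 1) (u2_nil X h)
  simp only [Matrix.sub_apply, Matrix.one_apply, if_pos rfl] at h1 h2
  norm_num at h1 h2
  constructor
  · linear_combination h1
  · linear_combination h2

lemma u2_det (X : M2 F) (h : IsU2 X) : X.det = 1 := by
  obtain ⟨h1, h2⟩ := u2_entries X h
  rw [det_fin_two, h1]
  linear_combination -h2

lemma u2_inv (X : M2 F) (h : IsU2 X) : X⁻¹ = 1 - (X - 1) := by
  apply inv_eq_right_inv
  have e : X * (1 - (X - 1)) = 1 - (X - 1) * (X - 1) := by noncomm_ring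
  rw [e, u2_nil X h, sub_zero]

lemma u2_inv_isU2 (X : M2 F) (h : IsU2 X) : IsU2 X⁻¹ := by
  rw [u2_inv X h]
  constructor
  · intro he
    apply h.1
    have : X - 1 = 0 := by
      have := sub_eq_zero.mpr he.symm
      rw [show (1:M2 F) - (1 - (X-1)) = X - 1 by noncomm_ring] at this
      exact this
    rw [sub_eq_zero] at this; exact this
  · rw [pow_two, show (1 : M2 F) - (X - 1) - 1 = -(X-1) by noncomm_ring, neg_mul_neg]
    exact u2_nil X h

lemma commU2_canon (C : M2 F) (h : IsCommU2 C) :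
    ∃ N M : M2 F, N ≠ 0 ∧ M ≠ 0 ∧ N * N = 0 ∧ M * M = 0 ∧
      C = (1 - (N * M).trace) • 1 + (2 + (N * M).trace) • (N * M)
        + (N * M).trace • M - (N * M).trace • N := by
  obtain ⟨X, Y, hX, hY, rfl⟩ := h
  refine ⟨X - 1, Y - 1, sub_ne_zero.mpr hX.1, sub_ne_zero.mpr hY.1,
    u2_nil X hX, u2_nil Y hY, ?_⟩
  rw [u2_inv X hX, u2_inv Y hY]
  have e : X * Y * (1 - (X - 1)) * (1 - (Y - 1)) =
      (1 + (X - 1)) * (1 + (Y - 1)) * ((1 - (X - 1)) * (1 - (Y - 1))) := by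
    noncomm_ring
  rw [e, comm_canon (X - 1) (Y - 1) (u2_nil X hX) (u2_nil Y hY)]

lemma commU2_det (C : M2 F) (h : IsCommU2 C) : C.det = 1 := by
  obtain ⟨X, Y, hX, hY, rfl⟩ := h
  rw [det_mul, det_mul, det_mul, u2_det X hX, u2_det Y hY,
    u2_det _ (u2_inv_isU2 X hX), u2_det _ (u2_inv_isU2 Y hY)]
  ring

lemma trace_one_fin2 : (1 : M2 F).trace = 2 := by
  rw [trace_fin_two]; simp [Matrix.one_apply]; norm_num

lemma commU2_struct (C : M2 F) (h : IsCommU2 C) :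
    ∃ q : F, C.trace = 2 + q ^ 2 ∧ (q = 0 → C = 1) ∧ ((2:F) ≠ 0 → C ≠ -1) := by
  obtain ⟨N, M, hN0, hM0, hN2, hM2, hC⟩ := commU2_canon C h
  set q := (N * M).trace with hq
  refine ⟨q, ?_, ?_, ?_⟩
  · rw [hC, trace_sub, trace_add, trace_add, trace_smul, trace_smul, trace_smul, trace_smul,
      trace_one_fin2, nilp_trace N hN2, nilp_trace M hM2, ← hq]
    simp only [smul_eq_mul]
    ring
  · intro h0
    rw [hC, NM_zero N M hN2 hM2 (by rw [← hq]; exact h0), h0]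
    simp
  · intro h2 hneg
    rcases eq_or_ne q 0 with h0 | h0
    · have hC1 : C = 1 := by
        rw [hC, NM_zero N M hN2 hM2 (by rw [← hq]; exact h0), h0]
        simp
      rw [hC1] at hneg
      have h22 := congrFun (congrFun hneg 0) 0
      simp [Matrix.one_apply, Matrix.neg_apply] at h22
      exact h2 (by linear_combination h22)
    · have e1 : N * C * N = N * (-1) * N := by rw [hneg]
      rw [hC] at e1
      have hNNM : N * (N * M) = 0 := by rw [← mul_assoc, hN2, zero_mul]
      have hNMN : N * M * N = q • N := hNMN_eq N M hN2 hM2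
      have lhs : N * ((1 - q) • 1 + (2 + q) • (N * M) + q • M - q • N) * N
          = (q * q) • N := by
        have h1 : N * ((1 - q) • 1 + (2 + q) • (N * M) + q • M - q • N)
            = (1 - q) • (N * 1) + (2 + q) • (N * (N * M)) + q • (N * M) - q • (N * N) := by
          rw [mul_sub, mul_add, mul_add, mul_smul_comm, mul_smul_comm, mul_smul_comm,
            mul_smul_comm]
        rw [h1, hNNM, hN2, smul_zero, smul_zero, sub_zero, add_zero, mul_one, add_mul,
          smul_mul_assoc, smul_mul_assoc, hN2, smul_zero, zero_add, hNMN, smul_smul]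
      rw [lhs] at e1
      have rhs : N * (-1 : M2 F) * N = -(N * N) := by noncomm_ring
      rw [rhs, hN2, neg_zero] at e1
      have hqq : q * q ≠ 0 := mul_ne_zero h0 h0
      exact hN0 ((smul_eq_zero.mp e1).resolve_left hqq)
omit [Field F] in
lemma fin2_mat_eq {a b c d a' b' c' d' : F} (h1 : a = a') (h2 : b = b') (h3 : c = c')
    (h4 : d = d') : !![a,b;c,d] = !![a',b';c',d'] := by rw [h1,h2,h3,h4]

lemma isU2_upper (t : F) (ht : t ≠ 0) : IsU2 !![1,t;0,1] := by
  constructor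
  · intro h
    have := congrFun (congrFun h 0) 1
    simp [Matrix.one_apply] at this
    exact ht this
  · have e : (!![1,t;0,1] - 1 : M2 F) = !![0,t;0,0] := by
      rw [one_fin_two]
      ext i j; fin_cases i <;> fin_cases j <;> simp
    rw [pow_two, e, mul_fin_two]
    ext i j; fin_cases i <;> fin_cases j <;> simp

lemma isU2_lower (s : F) (hs : s ≠ 0) : IsU2 !![1,0;s,1] := by
  constructor
  · intro h
    have := congrFun (congrFun h 1) 0
    simp [Matrix.one_apply] at this
    exact hs this
  · have e : (!![1,0;s,1] - 1 : M2 F) = !![0,0;s,0] := by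
      rw [one_fin_two]
      ext i j; fin_cases i <;> fin_cases j <;> simp
    rw [pow_two, e, mul_fin_two]
    ext i j; fin_cases i <;> fin_cases j <;> simp

lemma isCommU2_explicit (t s : F) (ht : t ≠ 0) (hs : s ≠ 0) :
    IsCommU2 !![1 + t*s + t^2*s^2, -(t^2*s); s^2*t, 1 - t*s] := by
  refine ⟨!![1,t;0,1], !![1,0;s,1], isU2_upper t ht, isU2_lower s hs, ?_⟩
  have hXinv : (!![1,t;0,1] : M2 F)⁻¹ = !![1,-t;0,1] := by
    apply inv_eq_right_inv
    rw [mul_fin_two, one_fin_two]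
    exact fin2_mat_eq (by ring) (by ring) (by ring) (by ring)
  have hYinv : (!![1,0;s,1] : M2 F)⁻¹ = !![1,0;-s,1] := by
    apply inv_eq_right_inv
    rw [mul_fin_two, one_fin_two]
    exact fin2_mat_eq (by ring) (by ring) (by ring) (by ring)
  rw [hXinv, hYinv, mul_fin_two, mul_fin_two, mul_fin_two]
  exact fin2_mat_eq (by ring) (by ring) (by ring) (by ring)

lemma eq_conj_of_mul_eq (A P B : M2 F) (hP : IsUnit P.det) (h : A * P = P * B) :
    A = P * B * P⁻¹ := by
  calc A = A * (P * P⁻¹) := by rw [mul_nonsing_inv _ hP, mul_one]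
  _ = (A * P) * P⁻¹ := by rw [mul_assoc]
  _ = (P * B) * P⁻¹ := by rw [h]

lemma conj_companion (A : M2 F) (hdet : A.det = 1)
    (hns : ¬(A 0 1 = 0 ∧ A 1 0 = 0 ∧ A 0 0 = A 1 1)) :
    ∃ P : M2 F, IsUnit P.det ∧ A = P * !![0,-1;1,A.trace] * P⁻¹ := by
  rw [det_fin_two] at hdet
  rw [trace_fin_two]
  set a := A 0 0; set b := A 0 1; set c := A 1 0; set d := A 1 1
  have hA : A = !![a,b;c,d] := eta_fin_two A
  rcases eq_or_ne c 0 with hc | hc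
  · rcases eq_or_ne b 0 with hb | hb
    · have had : a ≠ d := fun h => hns ⟨hb, hc, h⟩
      have hPu : IsUnit (det !![(1:F),a;1,d]) := by
        rw [det_fin_two_of]
        exact isUnit_iff_ne_zero.mpr (by intro h; exact had (by linear_combination -h))
      refine ⟨!![1,a;1,d], hPu, eq_conj_of_mul_eq _ _ _ hPu ?_⟩
      rw [hA, mul_fin_two, mul_fin_two]
      exact fin2_mat_eq (by linear_combination hb) (by linear_combination (d-c)*hb - hdet)
        (by linear_combination hc) (by linear_combination (a-b)*hc - hdet)
    · have hPu : IsUnit (det !![(0:F),b;1,d]) := by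
        rw [det_fin_two_of]
        exact isUnit_iff_ne_zero.mpr (by intro h; exact hb (by linear_combination -h))
      refine ⟨!![0,b;1,d], hPu, eq_conj_of_mul_eq _ _ _ hPu ?_⟩
      rw [hA, mul_fin_two, mul_fin_two]
      exact fin2_mat_eq (by ring) (by ring) (by ring) (by linear_combination -hdet)
  · have hPu : IsUnit (det !![(1:F),a;0,c]) := by
      rw [det_fin_two_of]
      exact isUnit_iff_ne_zero.mpr (by intro h; exact hc (by linear_combination h))
    refine ⟨!![1,a;0,c], hPu, eq_conj_of_mul_eq _ _ _ hPu ?_⟩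
    rw [hA, mul_fin_two, mul_fin_two]
    exact fin2_mat_eq (by ring) (by linear_combination -hdet) (by ring) (by ring)
lemma conj_cancel (P : M2 F) (hP : IsUnit P.det) (X : M2 F) :
    P⁻¹ * (P * X * P⁻¹) * P = X := by
  rw [mul_assoc, nonsing_inv_mul_cancel_right _ _ hP, ← mul_assoc, nonsing_inv_mul _ hP, one_mul]

lemma isU2_conj (X P : M2 F) (hP : IsUnit P.det) (h : IsU2 X) : IsU2 (P * X * P⁻¹) := by
  constructor
  · intro he
    apply h.1
    have := congrArg (fun Z => P⁻¹ * Z * P) he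
    rw [conj_cancel P hP X, mul_one, nonsing_inv_mul _ hP] at this
    exact this
  · have e : P * X * P⁻¹ - 1 = P * (X - 1) * P⁻¹ := by
      rw [mul_sub, sub_mul, mul_one, mul_nonsing_inv _ hP]
    rw [pow_two, e, mul_assoc, mul_assoc, ← mul_assoc P⁻¹, ← mul_assoc P⁻¹,
      nonsing_inv_mul _ hP, one_mul, ← mul_assoc, ← mul_assoc, mul_assoc _ (X-1) (X-1),
      mul_assoc P, ← pow_two, h.2]
    simp

lemma u2_det_unit (X : M2 F) (h : IsU2 X) : IsUnit X.det := by
  rw [u2_det X h]; exact isUnit_one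

lemma isCommU2_conj (C P : M2 F) (hP : IsUnit P.det) (h : IsCommU2 C) :
    IsCommU2 (P * C * P⁻¹) := by
  obtain ⟨X, Y, hX, hY, rfl⟩ := h
  refine ⟨P * X * P⁻¹, P * Y * P⁻¹, isU2_conj X P hP hX, isU2_conj Y P hP hY, ?_⟩
  have hPP : P⁻¹ * P = 1 := nonsing_inv_mul _ hP
  have hPP' : P * P⁻¹ = 1 := mul_nonsing_inv _ hP
  have iX : (P * X * P⁻¹)⁻¹ = P * X⁻¹ * P⁻¹ := by
    apply inv_eq_right_inv
    simp only [← mul_assoc]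
    rw [mul_assoc (P*X) P⁻¹ P, hPP, mul_one, mul_assoc P X X⁻¹,
      mul_nonsing_inv _ (u2_det_unit X hX), mul_one, hPP']
  have iY : (P * Y * P⁻¹)⁻¹ = P * Y⁻¹ * P⁻¹ := by
    apply inv_eq_right_inv
    simp only [← mul_assoc]
    rw [mul_assoc (P*Y) P⁻¹ P, hPP, mul_one, mul_assoc P Y Y⁻¹,
      mul_nonsing_inv _ (u2_det_unit Y hY), mul_one, hPP']
  rw [iX, iY]
  have cancel : ∀ U V : M2 F, (P * U * P⁻¹) * (P * V * P⁻¹) = P * (U * V) * P⁻¹ := by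
    intro U V
    simp only [← mul_assoc]
    rw [mul_assoc (P*U) P⁻¹ P, hPP, mul_one]
  rw [cancel, cancel, cancel]

/-- key: nonscalar + det 1 + trace `2 + s²` with `s ≠ 0` implies commutator. -/
lemma isCommU2_of_trace (A : M2 F) (hdet : A.det = 1)
    (hns : ¬(A 0 1 = 0 ∧ A 1 0 = 0 ∧ A 0 0 = A 1 1)) (s : F) (hs : s ≠ 0)
    (htr : A.trace = 2 + s ^ 2) : IsCommU2 A := by
  obtain ⟨P, hP, hPA⟩ := conj_companion A hdet hns
  set C : M2 F := !![1 + 1*s + 1^2*s^2, -(1^2*s); s^2*1, 1 - 1*s] with hCdef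
  have hCcomm : IsCommU2 C := isCommU2_explicit 1 s one_ne_zero hs
  have hCdet : C.det = 1 := by rw [hCdef, det_fin_two_of]; ring
  have hCns : ¬(C 0 1 = 0 ∧ C 1 0 = 0 ∧ C 0 0 = C 1 1) := by
    rintro ⟨-, h2, -⟩
    rw [hCdef] at h2
    simp at h2
    exact hs h2
  have hCtr : C.trace = A.trace := by
    rw [hCdef, trace_fin_two, htr]
    simp
    ring
  obtain ⟨Q, hQ, hQC⟩ := conj_companion C hCdet hCns
  rw [hCtr] at hQC
  -- A = P * comp * P⁻¹,  C = Q * comp * Q⁻¹  =>  A = (P*Q⁻¹) * C * (P*Q⁻¹)⁻¹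
  have hcomp : !![0,-1;1,A.trace] = Q⁻¹ * C * Q := by
    rw [hQC]
    exact (conj_cancel Q hQ _).symm
  have hPQ : IsUnit (P * Q⁻¹).det := by
    rw [det_mul]
    exact hP.mul (isUnit_nonsing_inv_det Q hQ)
  have hinv : (P * Q⁻¹)⁻¹ = Q * P⁻¹ := by
    rw [Matrix.mul_inv_rev, Matrix.nonsing_inv_nonsing_inv _ hQ]
  have : A = (P * Q⁻¹) * C * (P * Q⁻¹)⁻¹ := by
    rw [hinv, hPA, hcomp]
    simp only [← mul_assoc]
  rw [this]
  exact isCommU2_conj C (P * Q⁻¹) hPQ hCcomm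
lemma conj_mul' (P : M2 F) (hP : IsUnit P.det) (U V : M2 F) :
    (P * U * P⁻¹) * (P * V * P⁻¹) = P * (U * V) * P⁻¹ := by
  simp only [← mul_assoc]
  rw [mul_assoc (P*U) P⁻¹ P, nonsing_inv_mul _ hP, mul_one]

lemma exists_three (hF : 4 ≤ Cardinal.mk F) : ∃ u : F, u ≠ 0 ∧ u ≠ 1 ∧ u ≠ -1 := by
  by_contra h
  push_neg at h
  have hsub : (Set.univ : Set F) ⊆ ({0, 1, -1} : Set F) := by
    intro x _
    rcases eq_or_ne x 0 with h0 | h0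
    · exact Or.inl h0
    rcases eq_or_ne x 1 with h1 | h1
    · exact Or.inr (Or.inl h1)
    · exact Or.inr (Or.inr (h x h0 h1))
  have h1 : (Cardinal.mk F) ≤ 3 := by
    calc Cardinal.mk F = Cardinal.mk (Set.univ : Set F) := Cardinal.mk_univ.symm
    _ ≤ Cardinal.mk ({0, 1, -1} : Set F) := Cardinal.mk_le_mk_of_subset hsub
    _ ≤ 1 + 1 + 1 := by
        refine le_trans (Cardinal.mk_insert_le) ?_
        gcongr
        refine le_trans (Cardinal.mk_insert_le) ?_
        gcongr
        exact le_of_eq (Cardinal.mk_singleton _)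
    _ = 3 := by norm_num
  have := le_trans hF h1
  norm_num at this

lemma prod2_core (A : M2 F) (hdet : A.det = 1)
    (hns : ¬(A 0 1 = 0 ∧ A 1 0 = 0 ∧ A 0 0 = A 1 1)) (s b c : F) (hs : s ≠ 0) (hb : b ≠ 0)
    (hbc : b * c = s ^ 2) (hm : c - b = 3 - A.trace) : IsProdCommU2 2 A := by
  set τ := A.trace with hτ
  set M1 : M2 F := !![1, b; c, 1 + s^2] with hM1
  set M2 : M2 F := !![-b, -(1 + s^2) - b*τ; 1, c + τ] with hM2
  have hM1det : M1.det = 1 := by rw [hM1, det_fin_two_of]; linear_combination -hbc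
  have hM2det : M2.det = 1 := by rw [hM2, det_fin_two_of]; linear_combination -hbc
  have hM1comm : IsCommU2 M1 := by
    apply isCommU2_of_trace M1 hM1det ?_ s hs
    · rw [hM1, trace_fin_two_of]; ring
    · rw [hM1]; rintro ⟨h1, -, -⟩; simp at h1; exact hb h1
  have hM2comm : IsCommU2 M2 := by
    apply isCommU2_of_trace M2 hM2det ?_ 1 one_ne_zero
    · rw [hM2, trace_fin_two_of]; linear_combination hm
    · rw [hM2]; rintro ⟨-, h1, -⟩; simp at h1
  have hprod : M1 * M2 = !![0, -1; 1, τ] := by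
    rw [hM1, hM2, mul_fin_two]
    exact fin2_mat_eq (by ring) (by linear_combination hbc) (by linear_combination -hbc)
      (by linear_combination -τ*hbc)
  obtain ⟨P, hP, hPA⟩ := conj_companion A hdet hns
  refine ⟨[P * M1 * P⁻¹, P * M2 * P⁻¹], by norm_num, ?_, ?_⟩
  · intro B hB
    rcases List.mem_pair.mp hB with rfl | rfl
    · exact isCommU2_conj _ P hP hM1comm
    · exact isCommU2_conj _ P hP hM2comm
  · rw [List.prod_cons, List.prod_cons, List.prod_nil, mul_one, conj_mul' P hP, hprod, ← hPA]
lemma neg_one_fin_two : (-1 : M2 F) = !![-1, 0; 0, -1] := by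
  ext i j
  fin_cases i <;> fin_cases j <;> simp [Matrix.neg_apply, Matrix.one_apply]

lemma neg_one_det : (-1 : M2 F).det = 1 := by
  rw [neg_one_fin_two, det_fin_two_of]; ring

lemma nonscalar_prod2 (hF : 4 ≤ Cardinal.mk F) (A : M2 F) (hdet : A.det = 1)
    (hns : ¬(A 0 1 = 0 ∧ A 1 0 = 0 ∧ A 0 0 = A 1 1)) : IsProdCommU2 2 A := by
  rcases eq_or_ne (3 - A.trace) 0 with hm | hm
  · exact prod2_core A hdet hns 1 1 1 one_ne_zero one_ne_zero (by ring)
      (by linear_combination -hm)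
  · obtain ⟨u, hu0, hu1, hun1⟩ := exists_three hF
    have hw : u⁻¹ - u ≠ 0 := by
      intro h
      have h2 : 1 - u^2 = 0 := by
        have := mul_eq_zero_of_left h u
        rw [sub_mul, inv_mul_cancel₀ hu0] at this
        linear_combination this
      rcases mul_eq_zero.mp (show (1 - u) * (1 + u) = 0 by linear_combination h2) with h | h
      · exact hu1 (by linear_combination -h)
      · exact hun1 (by linear_combination h)
    set w := u⁻¹ - u with hwdef
    set s := (3 - A.trace) / w with hsdef
    have hs : s ≠ 0 := div_ne_zero hm hw
    refine prod2_core A hdet hns s (s * u) (s / u) hs (mul_ne_zero hs hu0) ?_ ?_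
    · field_simp
    · calc s / u - s * u = s * (u⁻¹ - u) := by rw [div_eq_mul_inv, mul_sub]
      _ = s * w := by rw [hwdef]
      _ = 3 - A.trace := by rw [hsdef]; exact div_mul_cancel₀ _ hw
lemma scalar_cases (A : M2 F) (hdet : A.det = 1)
    (hsc : A 0 1 = 0 ∧ A 1 0 = 0 ∧ A 0 0 = A 1 1) : A = 1 ∨ A = -1 := by
  obtain ⟨hb, hc, had⟩ := hsc
  rw [det_fin_two, hb, ← had] at hdet
  have h2 : (A 0 0 - 1) * (A 0 0 + 1) = 0 := by linear_combination hdet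
  rcases mul_eq_zero.mp h2 with h | h
  · left
    rw [eta_fin_two A, hb, hc, ← had, show A 0 0 = 1 by linear_combination h, one_fin_two]
  · right
    rw [eta_fin_two A, hb, hc, ← had, show A 0 0 = -1 by linear_combination h, neg_one_fin_two]

lemma prodCommU2_mono {k n : ℕ} (h : k ≤ n) (A : M2 F) (hA : IsProdCommU2 k A) :
    IsProdCommU2 n A := by
  obtain ⟨L, hL, hmem, hprod⟩ := hA
  exact ⟨L, le_trans hL h, hmem, hprod⟩

lemma one_prod (hone : (A : M2 F) = 1) : IsProdCommU2 0 A :=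
  ⟨[], by norm_num, by simp, by simp [hone.symm]⟩

lemma neg_one_prod3 (hF : 4 ≤ Cardinal.mk F) : IsProdCommU2 3 (-1 : M2 F) := by
  have hC : IsCommU2 (!![1 + 1*1 + 1^2*1^2, -(1^2*1); 1^2*1, 1 - 1*1] : M2 F) :=
    isCommU2_explicit 1 1 one_ne_zero one_ne_zero
  have hCeq : (!![1 + 1*1 + 1^2*1^2, -(1^2*1); 1^2*1, 1 - 1*1] : M2 F) = !![3,-1;1,0] :=
    fin2_mat_eq (by ring) (by ring) (by ring) (by ring)
  rw [hCeq] at hC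
  have hD : IsProdCommU2 2 (!![0,-1;1,-3] : M2 F) := by
    apply nonscalar_prod2 hF
    · rw [det_fin_two_of]; ring
    · rintro ⟨h1, -, -⟩
      simp at h1
  obtain ⟨L, hL, hmem, hprod⟩ := hD
  refine ⟨!![3,-1;1,0] :: L, by simp only [List.length_cons]; omega, ?_, ?_⟩
  · intro B hB
    rcases List.mem_cons.mp hB with rfl | hB
    · exact hC
    · exact hmem B hB
  · rw [List.prod_cons, hprod, mul_fin_two]
    rw [neg_one_fin_two]
    exact fin2_mat_eq (by ring) (by ring) (by ring) (by ring)

lemma inv_of_det_one (B : M2 F) (h : B.det = 1) : B⁻¹ = B.adjugate := by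
  rw [inv_def, h, Ring.inverse_one, one_smul]

lemma trace_inv_eq (B : M2 F) (h : B.det = 1) : B⁻¹.trace = B.trace := by
  rw [inv_of_det_one B h, adjugate_fin_two, trace_fin_two, trace_fin_two]
  simp
  ring
theorem stmt1 {F : Type*} [Field F] (hF : 4 ≤ Cardinal.mk F) :
    (∀ A : Matrix (Fin 2) (Fin 2) F, A.det = 1 → IsProdCommU2 3 A) ∧
    (ringChar F = 2 → ∀ A : Matrix (Fin 2) (Fin 2) F, A.det = 1 → IsProdCommU2 2 A) ∧
    (ringChar F ≠ 2 →
      ((∀ A : Matrix (Fin 2) (Fin 2) F, A.det = 1 → IsProdCommU2 2 A) ↔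
        ∃ a b : F, a ≠ 0 ∧ b ≠ 0 ∧ (-1 : F) = a ^ 2 + b ^ 2)) := by
  refine ⟨?_, ?_, ?_⟩
  · intro A hdet
    by_cases hsc : A 0 1 = 0 ∧ A 1 0 = 0 ∧ A 0 0 = A 1 1
    · rcases scalar_cases A hdet hsc with h1 | h1
      · exact prodCommU2_mono (by norm_num) A (one_prod h1)
      · rw [h1]; exact neg_one_prod3 hF
    · exact prodCommU2_mono (by norm_num) A (nonscalar_prod2 hF A hdet hsc)
  · intro hchar A hdet
    have hF2 : (2 : F) = 0 := by
      have := ringChar.Nat.cast_ringChar (R := F)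
      rw [hchar] at this
      exact_mod_cast this
    by_cases hsc : A 0 1 = 0 ∧ A 1 0 = 0 ∧ A 0 0 = A 1 1
    · rcases scalar_cases A hdet hsc with h1 | h1
      · exact prodCommU2_mono (by norm_num) A (one_prod h1)
      · have hmo : (-1 : M2 F) = 1 := by
          rw [neg_one_fin_two, one_fin_two]
          exact fin2_mat_eq (by linear_combination -hF2) rfl rfl (by linear_combination -hF2)
        rw [h1, hmo]
        exact prodCommU2_mono (by norm_num) _ (one_prod rfl)
    · exact nonscalar_prod2 hF A hdet hsc
  · intro hchar
    have h2 : (2 : F) ≠ 0 := Ring.two_ne_zero hchar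
    constructor
    · intro hall
      obtain ⟨L, hL, hmem, hprod⟩ := hall (-1) neg_one_det
      rcases L with _ | ⟨C₁, _ | ⟨C₂, _ | ⟨C₃, T⟩⟩⟩
      · rw [List.prod_nil] at hprod
        have h00 := congrFun (congrFun hprod 0) 0
        simp [Matrix.one_apply, Matrix.neg_apply] at h00
        exact absurd (by linear_combination h00 : (2:F) = 0) h2
      · rw [List.prod_cons, List.prod_nil, mul_one] at hprod
        obtain ⟨q, -, -, hne⟩ := commU2_struct C₁ (hmem C₁ (by simp))
        exact absurd hprod (hne h2)
      · rw [List.prod_cons, List.prod_cons, List.prod_nil, mul_one] at hprod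
        have hC1 := hmem C₁ (by simp)
        have hC2 := hmem C₂ (by simp)
        obtain ⟨q₁, htr1, hq10, hne1⟩ := commU2_struct C₁ hC1
        obtain ⟨q₂, htr2, hq20, hne2⟩ := commU2_struct C₂ hC2
        have hd1 : C₁.det = 1 := commU2_det _ hC1
        have hd1u : IsUnit C₁.det := by rw [hd1]; exact isUnit_one
        have hC2eq : C₂ = -C₁⁻¹ := by
          have e := congrArg (fun Z => C₁⁻¹ * Z) hprod
          rw [← mul_assoc, nonsing_inv_mul _ hd1u, one_mul, mul_neg_one] at e
          exact e
        have htr2' : C₂.trace = -C₁.trace := by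
          rw [hC2eq, trace_neg, trace_inv_eq C₁ hd1]
        have hq1 : q₁ ≠ 0 := by
          intro h0
          rw [hq10 h0, one_mul] at hprod
          exact (hne2 h2) hprod
        have hq2 : q₂ ≠ 0 := by
          intro h0
          rw [hq20 h0, mul_one] at hprod
          exact (hne1 h2) hprod
        have key : q₁ ^ 2 + q₂ ^ 2 = -4 := by
          rw [htr1, htr2] at htr2'
          linear_combination htr2'
        refine ⟨q₁ / 2, q₂ / 2, div_ne_zero hq1 h2, div_ne_zero hq2 h2, ?_⟩
        field_simp
        linear_combination -key
      · exfalso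
        simp at hL
    · rintro ⟨a, b, ha, hb, hab⟩ A hdet
      by_cases hsc : A 0 1 = 0 ∧ A 1 0 = 0 ∧ A 0 0 = A 1 1
      · rcases scalar_cases A hdet hsc with h1 | h1
        · exact prodCommU2_mono (by norm_num) A (one_prod h1)
        · rw [h1]
          set τ : F := 2 + (2*a)^2 with hτ
          have hC1 : IsCommU2 (!![0,-1;1,τ] : M2 F) := by
            apply isCommU2_of_trace _ (by rw [det_fin_two_of]; ring) ?_ (2*a)
              (mul_ne_zero h2 ha) (by rw [trace_fin_two_of, hτ]; ring)
            rintro ⟨-, hx, -⟩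
            simp at hx
          have hC2 : IsCommU2 (!![-τ,-1;1,0] : M2 F) := by
            apply isCommU2_of_trace _ (by rw [det_fin_two_of]; ring) ?_ (2*b)
              (mul_ne_zero h2 hb) ?_
            · rintro ⟨-, hx, -⟩
              simp at hx
            · rw [trace_fin_two_of, hτ]
              linear_combination 4*hab
          refine ⟨[!![0,-1;1,τ], !![-τ,-1;1,0]], by norm_num, ?_, ?_⟩
          · intro B hB
            rcases List.mem_pair.mp hB with rfl | rfl
            · exact hC1
            · exact hC2
          · rw [List.prod_cons, List.prod_cons, List.prod_nil, mul_one, mul_fin_two,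
              neg_one_fin_two]
            exact fin2_mat_eq (by ring) (by ring) (by ring) (by ring)
      · exact nonscalar_prod2 hF A hdet hsc
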